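/- Assume P(I(Θ) ∈ ℤ) = 1. Let A ⊆ E be a measurable set which is shift invariant (x ∈ A if and only if Bx ∈ A) and homogeneous (x ∈ A implies tx ∈ A for all t > 0). Then the following statements are equivalent: (i) ν(A) = 0; (ii) P(Θ ∈ A) = 0; (iii) P(Θ ∈ A | I(Θ) = 0) = 0. -/

import Mathlib

open MeasureTheory ProbabilityTheory Set Filter
open scoped ENNReal NNReal Topology

noncomputable section

/-- The iterated backshift operator: `(B^k x) j = x (j - k)`. -/
def backshift {V : Type*} (k : ℤ) (x : ℤ → V) : ℤ → V := fun j => x (j - k)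

/-- `InfargmaxAt x j` is the event `I(x) = j` for the infargmax functional `I`:
the first time the supremum of the norms is achieved is `j`, i.e.
`sup_{i<j} ‖x_i‖ < ‖x_j‖` and `sup_{i>j} ‖x_i‖ ≤ ‖x_j‖`.  (`I(x) ∈ ℤ` is then
expressed as `∃ j, InfargmaxAt x j`.) -/
def InfargmaxAt {V : Type*} [NormedAddCommGroup V] (x : ℤ → V) (j : ℤ) : Prop :=
  (⨆ i : {i : ℤ // i < j}, (‖x i.1‖₊ : ℝ≥0∞)) < (‖x j‖₊ : ℝ≥0∞) ∧
    (⨆ i : {i : ℤ // j < i}, (‖x i.1‖₊ : ℝ≥0∞)) ≤ (‖x j‖₊ : ℝ≥0∞)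

set_option linter.unusedSectionVars false

section Helpers

variable {V : Type*} [NormedAddCommGroup V]

lemma backshift_comp (k l : ℤ) (x : ℤ → V) :
    backshift k (backshift l x) = backshift (k + l) x := by
  funext j
  show x (j - k - l) = x (j - (k + l))
  congr 1; ring

lemma backshift_zero (x : ℤ → V) : backshift 0 x = x := by
  funext j; show x (j - 0) = x j; rw [sub_zero]

lemma backshift_preimage (k l : ℤ) (T : Set (ℤ → V)) :
    backshift l ⁻¹' (backshift k ⁻¹' T) = backshift (k + l) ⁻¹' T := by
  ext x
  simp only [mem_preimage, backshift_comp]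

lemma measurable_backshift [MeasurableSpace V] (k : ℤ) :
    Measurable (backshift k : (ℤ → V) → ℤ → V) :=
  measurable_pi_lambda _ fun j => measurable_pi_apply (j - k)

lemma infargmaxAt_smul [NormedSpace ℝ V] {c : ℝ} (hc : 0 < c) (x : ℤ → V) (j : ℤ) :
    InfargmaxAt (c • x) j ↔ InfargmaxAt x j := by
  have hco : ((‖c‖₊ : ℝ≥0∞)) ≠ 0 := by
    simp [hc.ne']
  have hct : ((‖c‖₊ : ℝ≥0∞)) ≠ ⊤ := ENNReal.coe_ne_top
  unfold InfargmaxAt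
  simp only [Pi.smul_apply, nnnorm_smul, ENNReal.coe_mul, ← ENNReal.mul_iSup]
  rw [ENNReal.mul_lt_mul_iff_right hco hct, ENNReal.mul_le_mul_iff_right hco hct]

lemma infargmaxAt_backshift (k : ℤ) (x : ℤ → V) (j : ℤ) :
    InfargmaxAt (backshift k x) j ↔ InfargmaxAt x (j - k) := by
  have e1 : (⨆ i : {i : ℤ // i < j}, (‖(backshift k x) i.1‖₊ : ℝ≥0∞))
      = ⨆ i : {i : ℤ // i < j - k}, (‖x i.1‖₊ : ℝ≥0∞) := by
    apply le_antisymm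
    · exact iSup_le fun i => le_iSup_of_le ⟨i.1 - k, by omega⟩ le_rfl
    · refine iSup_le fun i => le_iSup_of_le ⟨i.1 + k, by omega⟩ ?_
      show (‖x i.1‖₊ : ℝ≥0∞) ≤ (‖x (i.1 + k - k)‖₊ : ℝ≥0∞)
      rw [add_sub_cancel_right]
  have e2 : (⨆ i : {i : ℤ // j < i}, (‖(backshift k x) i.1‖₊ : ℝ≥0∞))
      = ⨆ i : {i : ℤ // j - k < i}, (‖x i.1‖₊ : ℝ≥0∞) := by
    apply le_antisymm
    · exact iSup_le fun i => le_iSup_of_le ⟨i.1 - k, by omega⟩ le_rfl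
    · refine iSup_le fun i => le_iSup_of_le ⟨i.1 + k, by omega⟩ ?_
      show (‖x i.1‖₊ : ℝ≥0∞) ≤ (‖x (i.1 + k - k)‖₊ : ℝ≥0∞)
      rw [add_sub_cancel_right]
  unfold InfargmaxAt
  rw [e1, e2]
  exact Iff.rfl

lemma measurableSet_infargmaxAt [MeasurableSpace V] [OpensMeasurableSpace V] (j : ℤ) :
    MeasurableSet {x : ℤ → V | InfargmaxAt x j} := by
  have hf : ∀ i : ℤ, Measurable fun x : ℤ → V => (‖x i‖₊ : ℝ≥0∞) :=
    fun i => (measurable_pi_apply i).nnnorm.coe_nnreal_ennreal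
  have h1 : Measurable fun x : ℤ → V => ⨆ i : {i : ℤ // i < j}, (‖x i.1‖₊ : ℝ≥0∞) :=
    Measurable.iSup fun i : {i : ℤ // i < j} => hf i.1
  have h2 : Measurable fun x : ℤ → V => ⨆ i : {i : ℤ // j < i}, (‖x i.1‖₊ : ℝ≥0∞) :=
    Measurable.iSup fun i : {i : ℤ // j < i} => hf i.1
  exact (measurableSet_lt (α := ℝ≥0∞) h1 (hf j)).inter (measurableSet_le (α := ℝ≥0∞) h2 (hf j))

lemma measure_eq_measure_inter_of_compl_null {Ω : Type*} [MeasurableSpace Ω] {μ : Measure Ω}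
    {s g : Set Ω} (hg : μ gᶜ = 0) : μ s = μ (s ∩ g) := by
  refine le_antisymm ?_ (measure_mono inter_subset_left)
  calc μ s ≤ μ ((s ∩ g) ∪ gᶜ) :=
        measure_mono (fun x hx => by by_cases h : x ∈ g <;> simp [hx, h])
    _ ≤ μ (s ∩ g) + μ gᶜ := measure_union_le _ _
    _ = μ (s ∩ g) := by rw [hg, add_zero]

end Helpers

/-- **Refined zero-infinity law.**  Assume `P(I(Θ) ∈ ℤ) = 1`.  If `A` is measurable,
shift invariant and homogeneous, then `ν(A) = 0 ↔ P(Θ ∈ A) = 0 ↔ P(Θ ∈ A | I(Θ) = 0) = 0`. -/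
theorem statement5
    -- `V` plays the role of `ℝ^d` (`d ≥ 1`) equipped with an arbitrary norm
    {V : Type*} [NormedAddCommGroup V] [NormedSpace ℝ V] [FiniteDimensional ℝ V]
    [Nontrivial V] [MeasurableSpace V] [BorelSpace V]
    (α : ℝ) (hα : 0 < α)
    -- the tail measure and its properties
    (ν : Measure (ℤ → V))
    (hν0 : ν {0} = 0)
    (hν1 : ν {y : ℤ → V | 1 < ‖y 0‖} = 1)
    (hνshift : ν.map (backshift 1) = ν)
    (hνhom : ∀ A : Set (ℤ → V), MeasurableSet A → ∀ c : ℝ, 0 < c →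
      ν ((fun x => c • x) '' A) = ENNReal.ofReal (c ^ (-α)) * ν A)
    -- the tail process `Y` and the spectral tail process `Θ`
    {Ω : Type*} [MeasurableSpace Ω] (P : Measure Ω) [IsProbabilityMeasure P]
    (Y : Ω → ℤ → V) (hYmeas : Measurable Y)
    (hYlaw : P.map Y = ν.restrict {y : ℤ → V | 1 < ‖y 0‖})
    (Θ : Ω → ℤ → V) (hΘdef : ∀ ω, Θ ω = ‖Y ω 0‖⁻¹ • Y ω)
    (hPareto : ∀ u : ℝ, 1 ≤ u → P {ω | u < ‖Y ω 0‖} = ENNReal.ofReal (u ^ (-α)))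
    (hindep : IndepFun (fun ω => ‖Y ω 0‖) Θ P)
    (hpolar : ∀ H : (ℤ → V) → ℝ≥0∞, Measurable H →
      ∫⁻ y in {y : ℤ → V | y 0 ≠ 0}, H y ∂ν
        = ∫⁻ r in Ioi (0 : ℝ),
            (∫⁻ ω, H (r • Θ ω) ∂P) * ENNReal.ofReal (α * r ^ (-α - 1)))
    -- the statement
    (hI : P {ω | ∃ j : ℤ, InfargmaxAt (Θ ω) j} = 1)
    (A : Set (ℤ → V)) (hAmeas : MeasurableSet A)
    (hAshift : ∀ x, x ∈ A ↔ backshift 1 x ∈ A)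
    (hAhom : ∀ x ∈ A, ∀ t : ℝ, 0 < t → t • x ∈ A) :
    (ν A = 0 ↔ P (Θ ⁻¹' A) = 0) ∧
      (P (Θ ⁻¹' A) = 0 ↔
        ProbabilityTheory.cond P {ω | InfargmaxAt (Θ ω) 0} (Θ ⁻¹' A) = 0) := by
    classical
  have hG0meas : MeasurableSet {y : ℤ → V | 1 < ‖y 0‖} :=
    measurableSet_lt measurable_const ((measurable_pi_apply 0).norm)
  have hGmeas : ∀ k : ℤ, MeasurableSet {y : ℤ → V | 1 < ‖y k‖} :=
    fun k => measurableSet_lt measurable_const ((measurable_pi_apply k).norm)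
  have hSmeas : ∀ j : ℤ, MeasurableSet {x : ℤ → V | InfargmaxAt x j} :=
    fun j => measurableSet_infargmaxAt j
  have hΘmeas : Measurable Θ := by
    have hYe : Measurable fun ω => Y ω 0 := (measurable_pi_apply 0).comp hYmeas
    have hrw : Θ = fun ω => ‖Y ω 0‖⁻¹ • Y ω := funext hΘdef
    rw [hrw]
    exact measurable_pi_lambda _ fun j =>
      (hYe.norm.inv).smul ((measurable_pi_apply j).comp hYmeas)
  -- scale invariance as an iff
  have hsc : ∀ (T : Set (ℤ → V)), (∀ x ∈ T, ∀ t : ℝ, 0 < t → t • x ∈ T) →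
      ∀ (x : ℤ → V) (t : ℝ), 0 < t → (t • x ∈ T ↔ x ∈ T) := by
    intro T hT x t ht
    constructor
    · intro h
      have h2 := hT _ h t⁻¹ (inv_pos.mpr ht)
      rwa [smul_smul, inv_mul_cancel₀ ht.ne', one_smul] at h2
    · intro h; exact hT _ h t ht
  -- a.s. 1 < ‖Y ω 0‖
  have hYG : P (Y ⁻¹' {y : ℤ → V | 1 < ‖y 0‖}) = 1 := by
    rw [← Measure.map_apply hYmeas hG0meas, hYlaw, Measure.restrict_apply hG0meas,
      inter_self]
    exact hν1
  have hYae : P (Y ⁻¹' {y : ℤ → V | 1 < ‖y 0‖})ᶜ = 0 := by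
    rw [measure_compl (hYmeas hG0meas) (measure_ne_top _ _), measure_univ, hYG, tsub_self]
  -- L1 : law transfer
  have L1 : ∀ T : Set (ℤ → V), MeasurableSet T → (∀ x ∈ T, ∀ t : ℝ, 0 < t → t • x ∈ T) →
      P (Θ ⁻¹' T) = ν (T ∩ {y : ℤ → V | 1 < ‖y 0‖}) := by
    intro T hT hThom
    have hset : Θ ⁻¹' T ∩ Y ⁻¹' {y : ℤ → V | 1 < ‖y 0‖}
        = Y ⁻¹' (T ∩ {y : ℤ → V | 1 < ‖y 0‖}) := by
      ext ω
      simp only [mem_inter_iff, mem_preimage, mem_setOf_eq]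
      constructor
      · rintro ⟨h1, h2⟩
        refine ⟨?_, h2⟩
        have hpos : (0:ℝ) < ‖Y ω 0‖⁻¹ := inv_pos.mpr (lt_trans one_pos h2)
        have h3 : ‖Y ω 0‖⁻¹ • Y ω ∈ T := by rw [← hΘdef ω]; exact h1
        exact (hsc T hThom (Y ω) _ hpos).mp h3
      · rintro ⟨h1, h2⟩
        refine ⟨?_, h2⟩
        have hpos : (0:ℝ) < ‖Y ω 0‖⁻¹ := inv_pos.mpr (lt_trans one_pos h2)
        rw [hΘdef ω]
        exact (hsc T hThom (Y ω) _ hpos).mpr h1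
    rw [measure_eq_measure_inter_of_compl_null hYae, hset,
      ← Measure.map_apply hYmeas (hT.inter hG0meas), hYlaw,
      Measure.restrict_apply (hT.inter hG0meas), inter_assoc, inter_self]
  -- L2 : shift invariance of ν under all backshifts
  have hB0 : ∀ T : Set (ℤ → V), (backshift (0:ℤ) : _) ⁻¹' T = T := by
    intro T; ext x; rw [mem_preimage, backshift_zero]
  have hBpre1 : ∀ T : Set (ℤ → V), MeasurableSet T → ν (backshift 1 ⁻¹' T) = ν T := by
    intro T hT
    conv_rhs => rw [← hνshift]
    rw [Measure.map_apply (measurable_backshift 1) hT]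
  have hBpreneg : ∀ T : Set (ℤ → V), MeasurableSet T →
      ν (backshift (-1) ⁻¹' T) = ν T := by
    intro T hT
    have h2 := hBpre1 _ (measurable_backshift (V := V) (-1) hT)
    rw [backshift_preimage, show (-1 : ℤ) + 1 = 0 by ring, hB0] at h2
    exact h2.symm
  have hBpre : ∀ (k : ℤ) (T : Set (ℤ → V)), MeasurableSet T →
      ν (backshift k ⁻¹' T) = ν T := by
    intro k
    induction k using Int.induction_on with
    | zero => intro T hT; rw [hB0]
    | succ n ih =>
        intro T hT
        have e : (backshift ((n : ℤ) + 1) : _) ⁻¹' T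
            = backshift (n : ℤ) ⁻¹' (backshift 1 ⁻¹' T) := by
          rw [backshift_preimage, show (1 : ℤ) + n = n + 1 by ring]
        rw [e, ih _ (measurable_backshift 1 hT), hBpre1 _ hT]
    | pred n ih =>
        intro T hT
        have e : (backshift (-(n : ℤ) - 1) : _) ⁻¹' T
            = backshift (-(n : ℤ)) ⁻¹' (backshift (-1) ⁻¹' T) := by
          rw [backshift_preimage, show (-1 : ℤ) + -(n:ℤ) = -(n:ℤ) - 1 by ring]
        rw [e, ih _ (measurable_backshift (-1) hT), hBpreneg _ hT]
  -- shift invariance of a set for all k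
  have hshiftk : ∀ (A' : Set (ℤ → V)), (∀ x, x ∈ A' ↔ backshift 1 x ∈ A') →
      ∀ (k : ℤ) (x : ℤ → V), x ∈ A' ↔ backshift k x ∈ A' := by
    intro A' hsh k
    induction k using Int.induction_on with
    | zero => intro x; rw [backshift_zero]
    | succ n ih =>
        intro x
        have e : backshift ((n:ℤ)+1) x = backshift 1 (backshift (n:ℤ) x) := by
          rw [backshift_comp, show (1:ℤ) + n = n + 1 by ring]
        rw [e]
        exact (ih x).trans (hsh _)
    | pred n ih =>
        intro x
        have e : backshift 1 (backshift (-(n:ℤ)-1) x) = backshift (-(n:ℤ)) x := by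
          rw [backshift_comp, show (1:ℤ) + (-(n:ℤ) - 1) = -(n:ℤ) by ring]
        rw [ih x, ← e]
        exact (hsh _).symm
  -- L3
  have L3 : ∀ (A' : Set (ℤ → V)), MeasurableSet A' →
      (∀ x, x ∈ A' ↔ backshift 1 x ∈ A') →
      (∀ x ∈ A', ∀ t : ℝ, 0 < t → t • x ∈ A') → ∀ j : ℤ,
      P (Θ ⁻¹' (A' ∩ {x | InfargmaxAt x j}))
        = ν (A' ∩ {x | InfargmaxAt x 0} ∩ {y | 1 < ‖y (-j)‖}) := by
    intro A' hA'meas hA'sh hA'hom j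
    have hTmeas : MeasurableSet (A' ∩ {x | InfargmaxAt x j}) := hA'meas.inter (hSmeas j)
    have hThom : ∀ x ∈ A' ∩ {x | InfargmaxAt x j}, ∀ t : ℝ, 0 < t →
        t • x ∈ A' ∩ {x | InfargmaxAt x j} := by
      rintro x ⟨hxA, hxS⟩ t ht
      exact ⟨hA'hom x hxA t ht, (infargmaxAt_smul ht x j).mpr hxS⟩
    rw [L1 _ hTmeas hThom]
    have hpre : backshift (-j) ⁻¹' (A' ∩ {x | InfargmaxAt x 0} ∩ {y | 1 < ‖y (-j)‖})
        = A' ∩ {x | InfargmaxAt x j} ∩ {y : ℤ → V | 1 < ‖y 0‖} := by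
      ext x
      simp only [mem_preimage, mem_inter_iff, mem_setOf_eq]
      have e0 : (backshift (-j) x) (-j) = x 0 := by
        show x (-j - -j) = x 0
        rw [sub_self]
      have eI : InfargmaxAt (backshift (-j) x) 0 ↔ InfargmaxAt x j := by
        rw [infargmaxAt_backshift, zero_sub, neg_neg]
      rw [e0, eI, ← hshiftk A' hA'sh (-j) x]
    rw [← hBpre (-j) _ ((hA'meas.inter (hSmeas 0)).inter (hGmeas (-j))), hpre]
  -- L4
  have L4 : ∀ (A' : Set (ℤ → V)) (k : ℤ),
      A' ∩ {x | InfargmaxAt x 0} ∩ {y | 1 < ‖y k‖}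
        ⊆ A' ∩ {x | InfargmaxAt x 0} ∩ {y : ℤ → V | 1 < ‖y 0‖} := by
    rintro A' k x ⟨⟨h1, h2⟩, h3⟩
    refine ⟨⟨h1, h2⟩, ?_⟩
    show 1 < ‖x 0‖
    rcases eq_or_ne k 0 with rfl | hk
    · exact h3
    have hle : (‖x k‖₊ : ℝ≥0∞) ≤ (‖x 0‖₊ : ℝ≥0∞) := by
      rcases lt_or_gt_of_ne hk with hk' | hk'
      · exact le_trans (le_iSup_of_le (⟨k, hk'⟩ : {i : ℤ // i < 0}) le_rfl) h2.1.le
      · exact le_trans (le_iSup_of_le (⟨k, hk'⟩ : {i : ℤ // 0 < i}) le_rfl) h2.2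
    have hle' : ‖x k‖ ≤ ‖x 0‖ := by exact_mod_cast ENNReal.coe_le_coe.mp hle
    exact lt_of_lt_of_le h3 hle'
  -- P(no infargmax) = 0
  have hUm : MeasurableSet {ω | ∃ j : ℤ, InfargmaxAt (Θ ω) j} := by
    have e : {ω | ∃ j : ℤ, InfargmaxAt (Θ ω) j}
        = ⋃ j : ℤ, Θ ⁻¹' {x | InfargmaxAt x j} := by
      ext ω; simp only [mem_setOf_eq, mem_iUnion, mem_preimage]
    rw [e]
    exact MeasurableSet.iUnion fun j => hΘmeas (hSmeas j)
  have hU : P ({ω | ∃ j : ℤ, InfargmaxAt (Θ ω) j})ᶜ = 0 := by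
    rw [measure_compl hUm (measure_ne_top _ _), measure_univ, hI, tsub_self]
  -- polar identity for A
  have hν0ne : MeasurableSet {y : ℤ → V | y 0 ≠ 0} := by
    have e : {y : ℤ → V | y 0 ≠ 0} = (fun y : ℤ → V => y 0) ⁻¹' {(0:V)}ᶜ := rfl
    rw [e]
    exact (measurable_pi_apply 0) (measurableSet_singleton (0:V)).compl
  have hApre := hsc A hAhom
  have hpolA : ν (A ∩ {y : ℤ → V | y 0 ≠ 0})
      = P (Θ ⁻¹' A) * ∫⁻ r in Ioi (0:ℝ), ENNReal.ofReal (α * r ^ (-α - 1)) := by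
    have hH : Measurable (A.indicator (1 : (ℤ → V) → ℝ≥0∞)) :=
      measurable_one.indicator hAmeas
    have hkey := hpolar _ hH
    have hLHS : ∫⁻ y in {y : ℤ → V | y 0 ≠ 0}, A.indicator 1 y ∂ν
        = ν (A ∩ {y : ℤ → V | y 0 ≠ 0}) := by
      rw [lintegral_indicator_one hAmeas, Measure.restrict_apply hAmeas]
    have hinner : ∀ r, r ∈ Ioi (0:ℝ) →
        (∫⁻ ω, A.indicator (1 : (ℤ → V) → ℝ≥0∞) (r • Θ ω) ∂P) = P (Θ ⁻¹' A) := by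
      intro r hr
      have hptw : ∀ ω, A.indicator (1 : (ℤ → V) → ℝ≥0∞) (r • Θ ω)
          = (Θ ⁻¹' A).indicator (1 : Ω → ℝ≥0∞) ω := by
        intro ω
        by_cases h : Θ ω ∈ A
        · have h1 : r • Θ ω ∈ A := (hApre (Θ ω) r hr).mpr h
          have h2 : ω ∈ Θ ⁻¹' A := h
          rw [indicator_of_mem h1, indicator_of_mem h2]
          rfl
        · have h1 : r • Θ ω ∉ A := fun hc => h ((hApre (Θ ω) r hr).mp hc)
          have h2 : ω ∉ Θ ⁻¹' A := h
          rw [indicator_of_notMem h1, indicator_of_notMem h2]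
      rw [lintegral_congr hptw, lintegral_indicator_one (hΘmeas hAmeas)]
    rw [hLHS] at hkey
    rw [hkey, setLIntegral_congr_fun measurableSet_Ioi
      (fun r hr => by rw [hinner r hr]),
      lintegral_const_mul' _ _ (measure_ne_top _ _)]
  -- the density constant is nonzero
  have hCne : (∫⁻ r in Ioi (0:ℝ), ENNReal.ofReal (α * r ^ (-α - 1))) ≠ 0 := by
    intro hC
    have hconst : (0:ℝ) < α * 2 ^ (-α - 1) := by positivity
    have h1 : ENNReal.ofReal (α * 2 ^ (-α - 1)) * volume (Ioo (1:ℝ) 2)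
        ≤ ∫⁻ r in Ioi (0:ℝ), ENNReal.ofReal (α * r ^ (-α - 1)) := by
      rw [← setLIntegral_const]
      refine le_trans (setLIntegral_mono' measurableSet_Ioo fun r hr => ?_)
        (lintegral_mono_set fun r hr => lt_trans one_pos hr.1)
      exact ENNReal.ofReal_le_ofReal (mul_le_mul_of_nonneg_left
        (Real.rpow_le_rpow_of_nonpos (lt_trans one_pos hr.1) hr.2.le (by linarith)) hα.le)
    rw [hC] at h1
    have h2 := le_antisymm h1 zero_le
    rcases mul_eq_zero.mp h2 with h | h
    · rw [ENNReal.ofReal_eq_zero] at h; linarith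
    · rw [Real.volume_Ioo] at h
      rw [ENNReal.ofReal_eq_zero] at h; linarith
  have keyA : ν (A ∩ {y : ℤ → V | y 0 ≠ 0}) = 0 ↔ P (Θ ⁻¹' A) = 0 := by
    rw [hpolA]
    constructor
    · intro h
      rcases mul_eq_zero.mp h with h | h
      · exact h
      · exact absurd h hCne
    · intro h; rw [h, zero_mul]
  -- part 1
  have part1 : ν A = 0 ↔ P (Θ ⁻¹' A) = 0 := by
    constructor
    · intro h
      exact keyA.mp (le_antisymm (h ▸ measure_mono inter_subset_left) zero_le)
    · intro h
      have h0 : ν (A ∩ {y : ℤ → V | y 0 ≠ 0}) = 0 := keyA.mpr h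
      have hj : ∀ j : ℤ, ν (A ∩ {y : ℤ → V | y j ≠ 0}) = 0 := by
        intro j
        have hpre : backshift (-j) ⁻¹' (A ∩ {y : ℤ → V | y 0 ≠ 0})
            = A ∩ {y : ℤ → V | y j ≠ 0} := by
          ext x
          simp only [mem_preimage, mem_inter_iff, mem_setOf_eq]
          have e0 : (backshift (-j) x) 0 = x j := by
            show x (0 - -j) = x j
            rw [zero_sub, neg_neg]
          rw [e0, ← hshiftk A hAshift (-j) x]
        calc ν (A ∩ {y : ℤ → V | y j ≠ 0})
            = ν (backshift (-j) ⁻¹' (A ∩ {y : ℤ → V | y 0 ≠ 0})) := by rw [hpre]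
          _ = ν (A ∩ {y : ℤ → V | y 0 ≠ 0}) := hBpre (-j) _ (hAmeas.inter hν0ne)
          _ = 0 := h0
      have hcover : A ⊆ {(0 : ℤ → V)} ∪ ⋃ j : ℤ, (A ∩ {y : ℤ → V | y j ≠ 0}) := by
        intro x hx
        by_cases hx0 : x = 0
        · exact mem_union_left _ (by simp [hx0])
        · have hex : ∃ j, x j ≠ 0 := by
            by_contra hc
            push_neg at hc
            exact hx0 (funext hc)
          rcases hex with ⟨j, hjx⟩
          exact mem_union_right _ (mem_iUnion.mpr ⟨j, ⟨hx, hjx⟩⟩)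
      have h2 : ν (⋃ j : ℤ, (A ∩ {y : ℤ → V | y j ≠ 0})) = 0 := by
        refine le_antisymm (le_trans (measure_iUnion_le _) ?_) zero_le
        simp [hj]
      refine le_antisymm ?_ zero_le
      calc ν A ≤ ν {(0 : ℤ → V)} + ν (⋃ j : ℤ, (A ∩ {y : ℤ → V | y j ≠ 0})) :=
            le_trans (measure_mono hcover) (measure_union_le _ _)
        _ = 0 := by rw [hν0, h2, add_zero]
  -- part 2
  have hs0meas : MeasurableSet {ω | InfargmaxAt (Θ ω) 0} := hΘmeas (hSmeas 0)
  have hiff3 : ProbabilityTheory.cond P {ω | InfargmaxAt (Θ ω) 0} (Θ ⁻¹' A) = 0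
      ↔ P ({ω | InfargmaxAt (Θ ω) 0} ∩ Θ ⁻¹' A) = 0 := by
    rw [cond_apply hs0meas P (Θ ⁻¹' A)]
    constructor
    · intro h
      rcases mul_eq_zero.mp h with h | h
      · exact absurd (ENNReal.inv_eq_zero.mp h) (measure_ne_top _ _)
      · exact h
    · intro h; rw [h, mul_zero]
  have hintereq : {ω | InfargmaxAt (Θ ω) 0} ∩ Θ ⁻¹' A
      = Θ ⁻¹' (A ∩ {x | InfargmaxAt x 0}) := by
    ext ω
    simp only [mem_inter_iff, mem_preimage, mem_setOf_eq]
    tauto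
  refine ⟨part1, ?_⟩
  rw [hiff3, hintereq]
  constructor
  · intro h
    exact le_antisymm
      (le_trans (measure_mono (preimage_mono inter_subset_left)) h.le) zero_le
  · intro h0
    have hjz : ∀ j : ℤ, P (Θ ⁻¹' (A ∩ {x | InfargmaxAt x j})) = 0 := by
      intro j
      have l30 := L3 A hAmeas hAshift hAhom 0
      simp only [neg_zero] at l30
      refine le_antisymm ?_ zero_le
      calc P (Θ ⁻¹' (A ∩ {x | InfargmaxAt x j}))
          = ν (A ∩ {x | InfargmaxAt x 0} ∩ {y | 1 < ‖y (-j)‖}) :=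
            L3 A hAmeas hAshift hAhom j
        _ ≤ ν (A ∩ {x | InfargmaxAt x 0} ∩ {y : ℤ → V | 1 < ‖y 0‖}) :=
            measure_mono (L4 A (-j))
        _ = P (Θ ⁻¹' (A ∩ {x | InfargmaxAt x 0})) := l30.symm
        _ = 0 := h0
    have hcov : Θ ⁻¹' A ⊆ (⋃ j : ℤ, Θ ⁻¹' (A ∩ {x | InfargmaxAt x j}))
        ∪ {ω | ∃ j : ℤ, InfargmaxAt (Θ ω) j}ᶜ := by
      intro ω hω
      by_cases h : ∃ j : ℤ, InfargmaxAt (Θ ω) j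
      · rcases h with ⟨j, hjj⟩
        exact mem_union_left _ (mem_iUnion.mpr ⟨j, ⟨hω, hjj⟩⟩)
      · exact mem_union_right _ h
    refine le_antisymm ?_ zero_le
    calc P (Θ ⁻¹' A)
        ≤ P (⋃ j : ℤ, Θ ⁻¹' (A ∩ {x | InfargmaxAt x j}))
          + P ({ω | ∃ j : ℤ, InfargmaxAt (Θ ω) j}ᶜ) :=
          le_trans (measure_mono hcov) (measure_union_le _ _)
      _ ≤ (∑' j : ℤ, P (Θ ⁻¹' (A ∩ {x | InfargmaxAt x j}))) + 0 :=
          add_le_add (measure_iUnion_le _) (le_of_eq hU)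
      _ = 0 := by rw [add_zero]; simp only [hjz, tsum_zero]
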